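/- Define G(d) := log(1−d) + β·∑_r π(r)·(log(1 − s(r)·(1−d)) − log(1 − s(r))) for d ∈ [0,1). There is a unique d_max ∈ (0,1) with G(d_max) = 0; moreover G(d) > 0 for all d ∈ (0, d_max) and G(d) < 0 for all d ∈ (d_max, 1). -/

import Mathlib

open Real

/-- For `G d = log (1-d) + β ∑ r, p r * (log (1 - s r * (1-d)) - log (1 - s r))`
there is a unique `d_max ∈ (0,1)` with `G d_max = 0`; moreover `G > 0` on
`(0, d_max)` and `G < 0` on `(d_max, 1)`. -/
theorem stmt_2 (I : ℕ) (hI : 2 ≤ I) (p s : Fin I → ℝ)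
    (hp : ∀ i, 0 < p i) (hpsum : ∑ i, p i = 1)
    (hs : ∀ i, s i ∈ Set.Ioo (0 : ℝ) 1)
    (β : ℝ) (hβ : β ∈ Set.Ioc (0 : ℝ) 1)
    (hsus : 1 < β * ∑ i, p i * (s i / (1 - s i)))
    (G : ℝ → ℝ)
    (hG : ∀ d, G d = log (1 - d) +
        β * ∑ r, p r * (log (1 - s r * (1 - d)) - log (1 - s r))) :
    (∃! dmax : ℝ, dmax ∈ Set.Ioo (0 : ℝ) 1 ∧ G dmax = 0) ∧
    ∀ dmax ∈ Set.Ioo (0 : ℝ) 1, G dmax = 0 →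
      (∀ d ∈ Set.Ioo (0 : ℝ) dmax, 0 < G d) ∧
      (∀ d ∈ Set.Ioo dmax (1 : ℝ), G d < 0) := by
  have hne : Nonempty (Fin I) := ⟨⟨0, by omega⟩⟩
  have hβ0 := hβ.1
  have hB : ∀ (r : Fin I) (d : ℝ), 0 ≤ d → 0 < 1 - s r * (1 - d) := by
    intro r d hd
    have h1 := (hs r).1
    have h2 := (hs r).2
    nlinarith [mul_nonneg h1.le hd]
  -- G 0 = 0
  have hG0 : G 0 = 0 := by simp [hG]
  -- strict concavity
  have hconc : StrictConcaveOn ℝ (Set.Ico (0:ℝ) 1) G := by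
    refine ⟨convex_Ico 0 1, ?_⟩
    intro x hx y hy hxy a b ha hb hab
    simp only [smul_eq_mul, hG]
    set z := a * x + b * y with hz
    have key1 : a * log (1 - x) + b * log (1 - y) < log (1 - z) := by
      have h1x : (1:ℝ) - x ∈ Set.Ioi (0:ℝ) := by
        simp only [Set.mem_Ioi]; linarith [hx.2]
      have h1y : (1:ℝ) - y ∈ Set.Ioi (0:ℝ) := by
        simp only [Set.mem_Ioi]; linarith [hy.2]
      have hne' : (1:ℝ) - x ≠ 1 - y := by
        intro h; apply hxy; linarith
      have := strictConcaveOn_log_Ioi.2 h1x h1y hne' ha hb hab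
      simp only [smul_eq_mul] at this
      have heq : a * (1 - x) + b * (1 - y) = 1 - z := by
        rw [hz]; linarith [hab]
      rwa [heq] at this
    have key2 : ∑ r, p r * ((a * log (1 - s r * (1 - x)) + b * log (1 - s r * (1 - y)))
          - log (1 - s r)) < ∑ r, p r * (log (1 - s r * (1 - z)) - log (1 - s r)) := by
      apply Finset.sum_lt_sum_of_nonempty Finset.univ_nonempty
      intro r _
      have hBx : (1:ℝ) - s r * (1 - x) ∈ Set.Ioi (0:ℝ) := hB r x hx.1
      have hBy : (1:ℝ) - s r * (1 - y) ∈ Set.Ioi (0:ℝ) := hB r y hy.1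
      have hne' : (1:ℝ) - s r * (1 - x) ≠ 1 - s r * (1 - y) := by
        intro h
        apply hxy
        have hs0 := (hs r).1
        have : s r * x = s r * y := by nlinarith
        exact mul_left_cancel₀ (ne_of_gt hs0) this
      have := strictConcaveOn_log_Ioi.2 hBx hBy hne' ha hb hab
      simp only [smul_eq_mul] at this
      have heq : a * (1 - s r * (1 - x)) + b * (1 - s r * (1 - y)) = 1 - s r * (1 - z) := by
        rw [hz]; linear_combination (1 - s r) * hab
      rw [heq] at this
      have := sub_lt_sub_right this (log (1 - s r))
      exact mul_lt_mul_of_pos_left this (hp r)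
    have hsum_eq : ∑ r, p r * ((a * log (1 - s r * (1 - x)) + b * log (1 - s r * (1 - y)))
          - log (1 - s r))
        = a * ∑ r, p r * (log (1 - s r * (1 - x)) - log (1 - s r))
          + b * ∑ r, p r * (log (1 - s r * (1 - y)) - log (1 - s r)) := by
      rw [Finset.mul_sum, Finset.mul_sum, ← Finset.sum_add_distrib]
      refine Finset.sum_congr rfl fun r _ => ?_
      linear_combination (p r * log (1 - s r)) * hab
    have hcomb : a * (log (1 - x) + β * ∑ r, p r * (log (1 - s r * (1 - x)) - log (1 - s r)))
        + b * (log (1 - y) + β * ∑ r, p r * (log (1 - s r * (1 - y)) - log (1 - s r)))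
        = (a * log (1 - x) + b * log (1 - y))
          + β * ∑ r, p r * ((a * log (1 - s r * (1 - x)) + b * log (1 - s r * (1 - y)))
            - log (1 - s r)) := by
      rw [hsum_eq]; ring
    rw [hcomb]
    exact add_lt_add key1 (mul_lt_mul_of_pos_left key2 hβ0)
  -- sign claims from concavity
  have claimA : ∀ m ∈ Set.Ioo (0:ℝ) 1, G m = 0 → ∀ d ∈ Set.Ioo (0:ℝ) m, 0 < G d := by
    intro m hm hGm d hd
    obtain ⟨hd0, hdm⟩ := hd
    have hm0 := hm.1
    have hb0 : 0 < d / m := div_pos hd0 hm0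
    have hb1 : d / m < 1 := (div_lt_one hm0).2 hdm
    have hbm : d / m * m = d := div_mul_cancel₀ d (ne_of_gt hm0)
    have h0mem : (0:ℝ) ∈ Set.Ico (0:ℝ) 1 := ⟨le_refl 0, one_pos⟩
    have hmmem : m ∈ Set.Ico (0:ℝ) 1 := ⟨hm0.le, hm.2⟩
    have ha' : (0:ℝ) < 1 - d / m := by linarith
    have := hconc.2 h0mem hmmem (ne_of_lt hm0) ha' hb0 (by ring)
    simpa [hG0, hGm, hbm] using this
  have claimB : ∀ m ∈ Set.Ioo (0:ℝ) 1, G m = 0 → ∀ d ∈ Set.Ioo m (1:ℝ), G d < 0 := by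
    intro m hm hGm d hd
    obtain ⟨hmd, hd1⟩ := hd
    have hm0 := hm.1
    have hd0 : 0 < d := lt_trans hm0 hmd
    have hb0 : 0 < m / d := div_pos hm0 hd0
    have hb1 : m / d < 1 := (div_lt_one hd0).2 hmd
    have hbd : m / d * d = m := div_mul_cancel₀ m (ne_of_gt hd0)
    have h0mem : (0:ℝ) ∈ Set.Ico (0:ℝ) 1 := ⟨le_refl 0, one_pos⟩
    have hdmem : d ∈ Set.Ico (0:ℝ) 1 := ⟨hd0.le, hd1⟩
    have ha' : (0:ℝ) < 1 - m / d := by linarith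
    have hkey := hconc.2 h0mem hdmem (ne_of_lt hd0) ha' hb0 (by ring)
    simp only [smul_eq_mul, mul_zero, zero_add, hG0, hbd, hGm] at hkey
    -- hkey : (1 - m/d) * 0 + m/d * G d < 0
    nlinarith [hkey]
  -- derivative of G at 0
  have hderiv : HasDerivAt G (β * (∑ r, p r * (s r / (1 - s r))) - 1) 0 := by
    have hGfun : G = fun d => log (1 - d) +
        β * ∑ r, p r * (log (1 - s r * (1 - d)) - log (1 - s r)) := funext hG
    rw [hGfun]
    have h1 : HasDerivAt (fun d : ℝ => log (1 - d)) (-1) 0 := by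
      have hinner : HasDerivAt (fun d : ℝ => 1 - d) (-1) 0 := by
        simpa using (hasDerivAt_id (0:ℝ)).const_sub 1
      have hlog := (Real.hasDerivAt_log (by norm_num : (1:ℝ) - 0 ≠ 0)).comp 0 hinner
      simpa [Function.comp_def] using hlog
    have h2 : ∀ r : Fin I, HasDerivAt
        (fun d : ℝ => p r * (log (1 - s r * (1 - d)) - log (1 - s r)))
        (p r * (s r / (1 - s r))) 0 := by
      intro r
      have hinner : HasDerivAt (fun d : ℝ => 1 - s r * (1 - d)) (s r) 0 := by
        have h' : HasDerivAt (fun d : ℝ => s r * (1 - d)) (s r * (-1)) 0 :=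
          (((hasDerivAt_id (0:ℝ)).const_sub 1).const_mul (s r))
        simpa using h'.const_sub 1
      have hargne : (1:ℝ) - s r * (1 - 0) ≠ 0 := by
        have := (hs r).2; simp only [sub_zero, mul_one]; linarith
      have hlog := (Real.hasDerivAt_log hargne).comp 0 hinner
      have hfinal := (hlog.sub_const (log (1 - s r))).const_mul (p r)
      have hval : p r * ((1 - s r * ((1:ℝ) - 0))⁻¹ * s r) = p r * (s r / (1 - s r)) := by
        rw [sub_zero, mul_one, div_eq_inv_mul]
      rw [← hval]
      exact hfinal
    have hsum := HasDerivAt.fun_sum (u := Finset.univ) (fun r _ => h2 r)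
    have htot := h1.add (hsum.const_mul β)
    exact htot.congr_deriv (by ring)
  have hc : 0 < β * (∑ r, p r * (s r / (1 - s r))) - 1 := by linarith
  -- a point with G > 0
  have hslope : Filter.Tendsto (slope G 0) (nhdsWithin 0 {(0:ℝ)}ᶜ)
      (nhds (β * (∑ r, p r * (s r / (1 - s r))) - 1)) :=
    hasDerivAt_iff_tendsto_slope.mp hderiv
  have hev : ∀ᶠ d in nhdsWithin 0 {(0:ℝ)}ᶜ, 0 < slope G 0 d :=
    hslope.eventually (eventually_gt_nhds hc)
  have hev2 : ∀ᶠ d in nhdsWithin (0:ℝ) (Set.Ioi 0), 0 < slope G 0 d :=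
    hev.filter_mono (nhdsWithin_mono 0 (fun x hx => ne_of_gt hx))
  have hev3 : ∀ᶠ d in nhdsWithin (0:ℝ) (Set.Ioi 0), d ∈ Set.Ioo (0:ℝ) 1 :=
    Filter.eventually_of_mem (Ioo_mem_nhdsGT one_pos) (fun x hx => hx)
  obtain ⟨dp, hdp_slope, hdp_mem⟩ := (hev2.and hev3).exists
  have hGdp : 0 < G dp := by
    rw [slope_def_field, hG0, sub_zero, sub_zero] at hdp_slope
    have := hdp_mem.1
    rcases div_pos_iff.mp hdp_slope with ⟨h1, _⟩ | ⟨_, h2⟩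
    · exact h1
    · linarith
  -- a point with G < 0 beyond dp
  have htb : Filter.Tendsto G (nhdsWithin (1:ℝ) (Set.Iio 1)) Filter.atBot := by
    have hGfun : G = fun d => log (1 - d) +
        β * ∑ r, p r * (log (1 - s r * (1 - d)) - log (1 - s r)) := funext hG
    rw [hGfun]
    apply Filter.Tendsto.atBot_add
    · have h13 : Filter.Tendsto (fun d : ℝ => 1 - d) (nhdsWithin 1 (Set.Iio 1))
          (nhdsWithin 0 (Set.Ioi 0)) := by
        apply tendsto_nhdsWithin_of_tendsto_nhds_of_eventually_within
        · have hcont1 : Continuous (fun d : ℝ => 1 - d) := by fun_prop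
          have h : Filter.Tendsto (fun d : ℝ => 1 - d) (nhds 1) (nhds 0) := by
            simpa using hcont1.tendsto (1:ℝ)
          exact h.mono_left nhdsWithin_le_nhds
        · filter_upwards [self_mem_nhdsWithin] with d hd
          exact sub_pos.2 (Set.mem_Iio.mp hd)
      exact (Real.tendsto_log_nhdsNE_zero.mono_left (nhdsWithin_mono _ (fun x hx => ne_of_gt hx))).comp h13
    · have hT2 : ContinuousAt (fun d : ℝ =>
          β * ∑ r, p r * (log (1 - s r * (1 - d)) - log (1 - s r))) 1 := by
        apply continuousAt_const.mul
        apply tendsto_finset_sum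
        intro r _
        apply continuousAt_const.mul
        apply ContinuousAt.sub _ continuousAt_const
        have harg : (1:ℝ) - s r * (1 - 1) ≠ 0 := by norm_num
        have hin : ContinuousAt (fun d : ℝ => 1 - s r * (1 - d)) 1 := by fun_prop
        exact hin.log harg
      exact (hT2.tendsto.mono_left nhdsWithin_le_nhds)
  have hevneg : ∀ᶠ d in nhdsWithin (1:ℝ) (Set.Iio 1), G d < 0 :=
    htb.eventually (Filter.eventually_lt_atBot 0)
  have hev4 : ∀ᶠ d in nhdsWithin (1:ℝ) (Set.Iio 1), d ∈ Set.Ioo dp 1 :=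
    Filter.eventually_of_mem (Ioo_mem_nhdsLT hdp_mem.2) (fun x hx => hx)
  obtain ⟨dn, hdn_neg, hdn_mem⟩ := (hevneg.and hev4).exists
  -- continuity of G on [dp, dn]
  have hcont : ContinuousOn G (Set.Icc dp dn) := by
    apply ContinuousOn.congr (f := fun d => log (1 - d) +
        β * ∑ r, p r * (log (1 - s r * (1 - d)) - log (1 - s r)))
      _ (fun x _ => hG x)
    intro x hx
    apply ContinuousAt.continuousWithinAt
    have hx0 : 0 < x := lt_of_lt_of_le hdp_mem.1 hx.1
    have hx1 : x < 1 := lt_of_le_of_lt hx.2 hdn_mem.2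
    apply ContinuousAt.add
    · have h1x : (1:ℝ) - x ≠ 0 := by linarith
      exact (Real.continuousAt_log h1x).comp (by fun_prop)
    apply continuousAt_const.mul
    apply tendsto_finset_sum
    intro r _
    apply continuousAt_const.mul
    apply ContinuousAt.sub _ continuousAt_const
    have harg : (1:ℝ) - s r * (1 - x) ≠ 0 := ne_of_gt (hB r x hx0.le)
    have hin : ContinuousAt (fun d : ℝ => 1 - s r * (1 - d)) x := by fun_prop
    exact hin.log harg
  -- IVT
  have hdpdn : dp ≤ dn := hdn_mem.1.le
  have hsub : Set.Ioo (G dn) (G dp) ⊆ G '' Set.Ioo dp dn :=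
    intermediate_value_Ioo' hdpdn hcont
  obtain ⟨dmax, hdmax_mem, hGdmax⟩ := hsub ⟨hdn_neg, hGdp⟩
  have hdmaxIoo : dmax ∈ Set.Ioo (0:ℝ) 1 :=
    ⟨lt_trans hdp_mem.1 hdmax_mem.1, lt_trans hdmax_mem.2 hdn_mem.2⟩
  constructor
  · refine ⟨dmax, ⟨hdmaxIoo, hGdmax⟩, ?_⟩
    rintro y ⟨hy, hGy⟩
    rcases lt_trichotomy y dmax with hlt | heq | hgt
    · have := claimA dmax hdmaxIoo hGdmax y ⟨hy.1, hlt⟩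
      linarith
    · exact heq
    · have := claimB dmax hdmaxIoo hGdmax y ⟨hgt, hy.2⟩
      linarith
  · intro m hm hGm
    exact ⟨claimA m hm hGm, claimB m hm hGm⟩
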